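/- K-fractional revival occurs in X at time τ if and only if there exists a partition P of the index set {0,1,…,d} of distinct eigenvalues such that (i) for each class C of P, the matrix Σ_{r∈C} E_r commutes with D_K, and (ii) e^{-iτθ_r} = e^{-iτθ_s} whenever r and s belong to the same class of P. -/

import Mathlib

open Matrix

noncomputable def transU {n : ℕ} (A : Matrix (Fin n) (Fin n) ℝ) (t : ℝ) :
    Matrix (Fin n) (Fin n) ℂ :=
  NormedSpace.exp ((-Complex.I * (t : ℂ)) • A.map (Complex.ofReal))

def DKmat {n : ℕ} (K : Finset (Fin n)) : Matrix (Fin n) (Fin n) ℝ :=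
  Matrix.of fun i j => if i = j ∧ i ∈ K then 1 else 0

section Aux

open Finset

variable {n m : ℕ}


variable {n m : ℕ}

lemma cmap_mul (M N : Matrix (Fin n) (Fin n) ℝ) :
    (M * N).map Complex.ofReal = M.map Complex.ofReal * N.map Complex.ofReal := by
  ext i j
  simp [Matrix.mul_apply, Matrix.map_apply]

lemma cmap_one : ((1 : Matrix (Fin n) (Fin n) ℝ).map Complex.ofReal) = 1 := by
  ext i j
  simp [Matrix.one_apply, Matrix.map_apply]
  split <;> simp

lemma cmap_sum {ι : Type*} (s : Finset ι) (f : ι → Matrix (Fin n) (Fin n) ℝ) :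
    ((∑ i ∈ s, f i).map Complex.ofReal) = ∑ i ∈ s, (f i).map Complex.ofReal := by
  ext i j
  simp [Matrix.map_apply, Matrix.sum_apply]

lemma cmap_smul (x : ℝ) (M : Matrix (Fin n) (Fin n) ℝ) :
    ((x • M).map Complex.ofReal) = (x : ℂ) • M.map Complex.ofReal := by
  ext i j
  simp [Matrix.map_apply]

lemma cmap_inj {M N : Matrix (Fin n) (Fin n) ℝ}
    (h : M.map Complex.ofReal = N.map Complex.ofReal) : M = N := by
  ext i j
  have := congrFun (congrFun h i) j
  simpa [Matrix.map_apply] using this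

lemma scalar_exp_summable (z : ℂ) : Summable fun k : ℕ => ((Nat.factorial k : ℂ))⁻¹ * z ^ k := by
  simpa [smul_eq_mul] using NormedSpace.expSeries_summable' (𝕂 := ℂ) z

lemma scalar_exp_tsum (z : ℂ) : Complex.exp z = ∑' k : ℕ, ((Nat.factorial k : ℂ))⁻¹ * z ^ k := by
  rw [Complex.exp_eq_exp_ℂ, NormedSpace.exp_eq_tsum (𝕂 := ℂ)]
  simp [smul_eq_mul]

lemma scalar_exp_summable' (z : ℂ) :
    Summable fun k : ℕ => ((Nat.factorial (k+1) : ℂ))⁻¹ * z ^ (k + 1) :=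
  (summable_nat_add_iff (f := fun k : ℕ => ((Nat.factorial k : ℂ))⁻¹ * z ^ k) 1).mpr
    (scalar_exp_summable z)

lemma scalar_exp_tail (z : ℂ) :
    (∑' k : ℕ, ((Nat.factorial (k+1) : ℂ))⁻¹ * z ^ (k + 1)) = Complex.exp z - 1 := by
  rw [scalar_exp_tsum z, Summable.tsum_eq_zero_add (scalar_exp_summable z)]
  simp

lemma exp_orth (a : Fin m → ℂ) (E : Fin m → Matrix (Fin n) (Fin n) ℂ)
    (hidem : ∀ r, E r * E r = E r)
    (horth : ∀ r s, r ≠ s → E r * E s = 0)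
    (hsum : ∑ r, E r = 1) :
    NormedSpace.exp (∑ r, a r • E r) = ∑ r, Complex.exp (a r) • E r := by
  letI : SeminormedRing (Matrix (Fin n) (Fin n) ℂ) := Matrix.linftyOpSemiNormedRing
  letI : NormedRing (Matrix (Fin n) (Fin n) ℂ) := Matrix.linftyOpNormedRing
  letI : NormedAlgebra ℂ (Matrix (Fin n) (Fin n) ℂ) := Matrix.linftyOpNormedAlgebra
  set N : Matrix (Fin n) (Fin n) ℂ := ∑ r, a r • E r with hN
  have hpow : ∀ k : ℕ, N ^ (k + 1) = ∑ r, a r ^ (k + 1) • E r := by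
    intro k
    induction k with
    | zero => simp [hN]
    | succ k ih =>
      rw [pow_succ, ih, hN, Finset.sum_mul_sum]
      refine Finset.sum_congr rfl fun r _ => ?_
      rw [Finset.sum_eq_single r]
      · rw [smul_mul_assoc, mul_smul_comm, hidem r, smul_smul, ← pow_succ]
      · intro s _ hs
        rw [smul_mul_assoc, mul_smul_comm, horth r s (Ne.symm hs), smul_zero, smul_zero]
      · intro h; exact absurd (Finset.mem_univ r) h
  have hsm : ∀ r : Fin m, Summable fun k : ℕ => ((Nat.factorial (k+1) : ℂ))⁻¹ * a r ^ (k + 1) :=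
    fun r => scalar_exp_summable' (a r)
  have hscal : ∀ r : Fin m,
      (∑' k : ℕ, ((Nat.factorial (k+1) : ℂ))⁻¹ * a r ^ (k + 1)) = Complex.exp (a r) - 1 :=
    fun r => scalar_exp_tail (a r)
  have hS : Summable fun k : ℕ => ((Nat.factorial k : ℂ))⁻¹ • N ^ k :=
    NormedSpace.expSeries_summable' (𝕂 := ℂ) N
  simp only [NormedSpace.exp_eq_tsum (𝕂 := ℂ)]
  rw [Summable.tsum_eq_zero_add hS]
  have hterm : ∀ k : ℕ, ((Nat.factorial (k+1) : ℂ))⁻¹ • N ^ (k + 1)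
      = ∑ r, (((Nat.factorial (k+1) : ℂ))⁻¹ * a r ^ (k + 1)) • E r := by
    intro k
    rw [hpow k, Finset.smul_sum]
    simp [smul_smul]
  rw [tsum_congr hterm, Summable.tsum_finsetSum (fun r _ => (hsm r).smul_const _)]
  have : ∀ r : Fin m, (∑' k : ℕ, (((Nat.factorial (k+1) : ℂ))⁻¹ * a r ^ (k + 1)) • E r)
      = (Complex.exp (a r) - 1) • E r := by
    intro r
    rw [Summable.tsum_smul_const (hsm r), hscal r]
  rw [Finset.sum_congr rfl fun r _ => this r]
  simp only [pow_zero, Nat.factorial_zero, Nat.cast_one, inv_one, one_smul, sub_smul]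
  rw [Finset.sum_sub_distrib, hsum]
  abel

end Aux

/-- K-fractional revival at time τ (i.e. `U(τ)` commutes with `D_K`) holds iff
there is a partition of the eigenvalue indices whose class-sums of idempotents
commute with `D_K` and on whose classes `e^{-iτθ}` is constant. -/
theorem kfr_iff_commuting_partition {n d : ℕ} (A : Matrix (Fin n) (Fin n) ℝ)
    (θ : Fin (d + 1) → ℝ) (E : Fin (d + 1) → Matrix (Fin n) (Fin n) ℝ)
    (hA : A = ∑ r, θ r • E r) (hθ : Function.Injective θ)
    (hsymm : ∀ r, (E r).IsSymm)
    (hidem : ∀ r, E r * E r = E r)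
    (horth : ∀ r s, r ≠ s → E r * E s = 0)
    (hsum : ∑ r, E r = 1)
    (K : Finset (Fin n)) (τ : ℝ) :
    (transU A τ * (DKmat K).map Complex.ofReal
        = (DKmat K).map Complex.ofReal * transU A τ) ↔
      ∃ P : Finpartition (Finset.univ : Finset (Fin (d + 1))),
        (∀ C ∈ P.parts, (∑ r ∈ C, E r) * DKmat K = DKmat K * (∑ r ∈ C, E r)) ∧
        (∀ C ∈ P.parts, ∀ r ∈ C, ∀ s ∈ C,
          Complex.exp (-Complex.I * τ * θ r) = Complex.exp (-Complex.I * τ * θ s)) := by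
  classical
  set E' : Fin (d + 1) → Matrix (Fin n) (Fin n) ℂ :=
    fun r => (E r).map Complex.ofReal with hE'
  set D' : Matrix (Fin n) (Fin n) ℂ := (DKmat K).map Complex.ofReal with hD'
  set c : Fin (d + 1) → ℂ := fun r => Complex.exp (-Complex.I * τ * θ r) with hc
  have hidem' : ∀ r, E' r * E' r = E' r := fun r => by
    rw [hE', ← cmap_mul, hidem r]
  have horth' : ∀ r s, r ≠ s → E' r * E' s = 0 := fun r s hrs => by
    rw [hE', ← cmap_mul, horth r s hrs]
    ext i j; simp [Matrix.map_apply]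
  have hsum' : ∑ r, E' r = 1 := by
    rw [hE', ← cmap_sum, hsum, cmap_one]
  -- spectral decomposition of U
  have hU : transU A τ = ∑ r, c r • E' r := by
    have harg : (-Complex.I * (τ : ℂ)) • A.map Complex.ofReal
        = ∑ r, (-Complex.I * τ * θ r) • E' r := by
      rw [hA, cmap_sum, Finset.smul_sum]
      refine Finset.sum_congr rfl fun r _ => ?_
      rw [cmap_smul, smul_smul]
    rw [transU, harg, exp_orth (fun r => -Complex.I * τ * θ r) E' hidem' horth' hsum']
  -- summing over a partition
  have hpartsum : ∀ (P : Finpartition (Finset.univ : Finset (Fin (d + 1))))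
      (f : Fin (d + 1) → Matrix (Fin n) (Fin n) ℂ),
      ∑ C ∈ P.parts, ∑ r ∈ C, f r = ∑ r, f r := by
    intro P f
    have hbu : P.parts.biUnion id = Finset.univ := by
      rw [← Finset.sup_eq_biUnion]; exact P.sup_parts
    calc ∑ C ∈ P.parts, ∑ r ∈ C, f r
        = ∑ r ∈ P.parts.biUnion id, f r := (Finset.sum_biUnion P.disjoint).symm
      _ = ∑ r, f r := by rw [hbu]
  constructor
  · -- forward direction
    intro hcomm
    refine ⟨Finpartition.ofSetoid (Setoid.ker c), ?_, ?_⟩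
    swap
    · intro C hC r hr s hs
      have hCr : (Finpartition.ofSetoid (Setoid.ker c)).part r = C :=
        Finpartition.part_eq_of_mem _ hC hr
      have : s ∈ (Finpartition.ofSetoid (Setoid.ker c)).part r := hCr ▸ hs
      exact Finpartition.mem_part_ofSetoid_iff_rel.mp this
    · set P := Finpartition.ofSetoid (Setoid.ker c) with hP
      have hval : ∀ C ∈ P.parts, ∀ r ∈ C, ∀ s ∈ C, c r = c s := by
        intro C hC r hr s hs
        have hCr : P.part r = C := Finpartition.part_eq_of_mem _ hC hr
        exact Finpartition.mem_part_ofSetoid_iff_rel.mp (hCr ▸ hs)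
      -- class sums over ℂ
      set F : Finset (Fin (d + 1)) → Matrix (Fin n) (Fin n) ℂ :=
        fun C => ∑ r ∈ C, E' r with hF
      have hFsum : ∑ C ∈ P.parts, F C = 1 := by rw [hF, hpartsum P E', hsum']
      have hFU : ∀ C ∈ P.parts, ∀ r0 ∈ C, F C * transU A τ = c r0 • F C := by
        intro C hC r0 hr0
        rw [hU, hF, Finset.sum_mul]
        have : ∀ s ∈ C, E' s * (∑ r, c r • E' r) = c r0 • E' s := by
          intro s hs
          rw [Finset.mul_sum, Finset.sum_eq_single s]
          · rw [mul_smul_comm, hidem' s, hval C hC s hs r0 hr0]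
          · intro b _ hb
            rw [mul_smul_comm, horth' s b (Ne.symm hb), smul_zero]
          · intro h; exact absurd (Finset.mem_univ s) h
        rw [Finset.sum_congr rfl this, ← Finset.smul_sum]
      have hUF : ∀ C ∈ P.parts, ∀ r0 ∈ C, transU A τ * F C = c r0 • F C := by
        intro C hC r0 hr0
        rw [hU, hF, Finset.mul_sum]
        have : ∀ s ∈ C, (∑ r, c r • E' r) * E' s = c r0 • E' s := by
          intro s hs
          rw [Finset.sum_mul, Finset.sum_eq_single s]
          · rw [smul_mul_assoc, hidem' s, hval C hC s hs r0 hr0]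
          · intro b _ hb
            rw [smul_mul_assoc, horth' b s hb, smul_zero]
          · intro h; exact absurd (Finset.mem_univ s) h
        rw [Finset.sum_congr rfl this, ← Finset.smul_sum]
      -- cross terms vanish
      have hcross : ∀ C ∈ P.parts, ∀ C' ∈ P.parts, C ≠ C' →
          F C * D' * F C' = 0 := by
        intro C hC C' hC' hne
        obtain ⟨r0, hr0⟩ := P.nonempty_of_mem_parts hC
        obtain ⟨r1, hr1⟩ := P.nonempty_of_mem_parts hC'
        have hcne : c r0 ≠ c r1 := by
          intro h
          have : r1 ∈ P.part r0 := Finpartition.mem_part_ofSetoid_iff_rel.mpr h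
          have hCr : P.part r0 = C := Finpartition.part_eq_of_mem _ hC hr0
          exact hne (P.eq_of_mem_parts hC hC' (hCr ▸ this) hr1)
        have h1 : c r0 • (F C * D' * F C') = c r1 • (F C * D' * F C') := by
          calc c r0 • (F C * D' * F C')
              = (c r0 • F C) * D' * F C' := by
                rw [smul_mul_assoc, smul_mul_assoc]
            _ = F C * transU A τ * D' * F C' := by rw [hFU C hC r0 hr0]
            _ = F C * (transU A τ * D') * F C' := by rw [mul_assoc (F C)]
            _ = F C * (D' * transU A τ) * F C' := by rw [hcomm]
            _ = F C * D' * (transU A τ * F C') := by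
                rw [← mul_assoc, ← mul_assoc, mul_assoc (F C * D')]
            _ = c r1 • (F C * D' * F C') := by
                rw [hUF C' hC' r1 hr1, mul_smul_comm]
        have := sub_eq_zero.mpr h1
        rw [← sub_smul] at this
        rcases smul_eq_zero.mp this with h | h
        · exact absurd (sub_eq_zero.mp h) hcne
        · exact h
      intro C hC
      -- F C commutes with D'
      have hFD : F C * D' = D' * F C := by
        have h1 : F C * D' = F C * D' * F C := by
          calc F C * D' = F C * D' * 1 := by rw [mul_one]
            _ = ∑ C' ∈ P.parts, F C * D' * F C' := by
                rw [← hFsum, Finset.mul_sum]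
            _ = F C * D' * F C := by
                rw [Finset.sum_eq_single C]
                · intro C' hC' hne
                  exact hcross C hC C' hC' (Ne.symm hne)
                · intro h; exact absurd hC h
        have h2 : D' * F C = F C * D' * F C := by
          calc D' * F C = 1 * D' * F C := by rw [one_mul]
            _ = ∑ C' ∈ P.parts, F C' * D' * F C := by
                rw [← hFsum, Finset.sum_mul, Finset.sum_mul]
            _ = F C * D' * F C := by
                rw [Finset.sum_eq_single C]
                · intro C' hC' hne
                  exact hcross C' hC' C hC hne
                · intro h; exact absurd hC h
        rw [h1, h2]
      -- pull back to ℝ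
      apply cmap_inj
      rw [cmap_mul, cmap_mul]
      have : (∑ r ∈ C, E r).map Complex.ofReal = F C := by
        rw [cmap_sum]
      rw [this, ← hD', hFD]
  · -- backward direction
    rintro ⟨P, h1, h2⟩
    have hUdecomp : transU A τ = ∑ C ∈ P.parts, ∑ r ∈ C, c r • E' r := by
      rw [hU, hpartsum P]
    rw [hUdecomp, Finset.sum_mul, Finset.mul_sum]
    refine Finset.sum_congr rfl fun C hC => ?_
    obtain ⟨r0, hr0⟩ := P.nonempty_of_mem_parts hC
    have hconst : ∑ r ∈ C, c r • E' r = c r0 • (∑ r ∈ C, E r).map Complex.ofReal := by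
      rw [cmap_sum, Finset.smul_sum]
      refine Finset.sum_congr rfl fun r hr => ?_
      rw [hc]
      simp only
      rw [h2 C hC r hr r0 hr0]
    have hcommC : (∑ r ∈ C, E r).map Complex.ofReal * D'
        = D' * (∑ r ∈ C, E r).map Complex.ofReal := by
      rw [hD', ← cmap_mul, ← cmap_mul, h1 C hC]
    rw [hconst, smul_mul_assoc, hcommC, mul_smul_comm]
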